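/- Let u ∈ C²(B_{2R}(0)) satisfy Δu ≥ M·u and 0 ≤ u ≤ 1 in the ball B_{2R}(0) ⊂ ℝ^d, where M > 0. Then there exist dimensional constants C, c > 0 such that sup_{B_R(0)} u ≤ C·e^{-c R √M}. -/

import Mathlib

/-- The Laplacian of `f : ℝ^d → ℝ`, as the sum of pure second derivatives in the
coordinate directions. -/
noncomputable def lap {d : ℕ} (f : EuclideanSpace ℝ (Fin d) → ℝ)
    (x : EuclideanSpace ℝ (Fin d)) : ℝ :=
  ∑ i : Fin d,
    fderiv ℝ (fun y => fderiv ℝ f y (EuclideanSpace.single i 1)) x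
      (EuclideanSpace.single i 1)

namespace ExpDecayAux

open Filter Metric Real Set

lemma second_deriv_nonpos_of_isLocalMax {g : ℝ → ℝ}
    (hg : ∀ᶠ t in nhds (0:ℝ), DifferentiableAt ℝ g t)
    (hg2 : DifferentiableAt ℝ (deriv g) 0) (hmax : IsLocalMax g 0) :
    deriv (deriv g) 0 ≤ 0 := by
  by_contra hL
  push_neg at hL
  set L := deriv (deriv g) 0 with hLdef
  have h0 : deriv g 0 = 0 := hmax.deriv_eq_zero
  have hD : HasDerivAt (deriv g) L 0 := hg2.hasDerivAt
  have hslope : Tendsto (slope (deriv g) 0) (nhdsWithin 0 {(0:ℝ)}ᶜ) (nhds L) :=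
    hasDerivAt_iff_tendsto_slope.mp hD
  have hpos : ∀ᶠ t in nhdsWithin (0:ℝ) (Ioi 0), 0 < deriv g t := by
    have h1 : ∀ᶠ t in nhdsWithin (0:ℝ) (Ioi 0), 0 < slope (deriv g) 0 t := by
      have := hslope.mono_left (nhdsWithin_mono 0 (by intro x hx; exact ne_of_gt hx))
      exact this.eventually (eventually_gt_nhds hL)
    have h2 : ∀ᶠ t in nhdsWithin (0:ℝ) (Ioi 0), 0 < t :=
      eventually_mem_nhdsWithin.mono fun t ht => ht
    filter_upwards [h1, h2] with t ht hpt
    have hs : slope (deriv g) 0 t = deriv g t / t := by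
      simp [slope_def_field, h0]
    rw [hs] at ht
    have := mul_pos ht hpt
    rwa [div_mul_cancel₀ _ (ne_of_gt hpt)] at this
  obtain ⟨δ, hδ', hIoo⟩ := (mem_nhdsGT_iff_exists_Ioo_subset).mp hpos
  have hδ : (0:ℝ) < δ := hδ'
  obtain ⟨ε, hε, hball⟩ := Metric.mem_nhds_iff.mp (hg.and hmax)
  set b := min δ ε / 2 with hb
  have hb0 : 0 < b := by positivity
  have hbδ : b < δ := by
    calc b ≤ δ / 2 := by exact div_le_div_of_nonneg_right (min_le_left _ _) (by norm_num)
    _ < δ := by linarith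
  have hbε : b < ε := by
    calc b ≤ ε / 2 := by exact div_le_div_of_nonneg_right (min_le_right _ _) (by norm_num)
    _ < ε := by linarith
  have hIcc : Icc (0:ℝ) b ⊆ ball (0:ℝ) ε := by
    intro t ht
    rw [Real.ball_eq_Ioo]
    constructor <;> [linarith [ht.1]; linarith [ht.2]]
  have hmono : StrictMonoOn g (Icc 0 b) := by
    apply strictMonoOn_of_deriv_pos (convex_Icc 0 b)
    · intro t ht
      exact ((hball (hIcc ht)).1).continuousAt.continuousWithinAt
    · intro t ht
      rw [interior_Icc] at ht
      exact hIoo ⟨ht.1, lt_trans ht.2 hbδ⟩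
  have h1 : g 0 < g b := hmono (left_mem_Icc.2 hb0.le) (right_mem_Icc.2 hb0.le) hb0
  have h2 : g b ≤ g 0 := (hball (hIcc (right_mem_Icc.2 hb0.le))).2
  linarith

variable {d : ℕ}

lemma dir2_nonpos (f : EuclideanSpace ℝ (Fin d) → ℝ) (p v : EuclideanSpace ℝ (Fin d))
    (h1 : ∀ᶠ y in nhds p, DifferentiableAt ℝ f y)
    (h2 : DifferentiableAt ℝ (fun y => fderiv ℝ f y v) p)
    (hmax : IsLocalMax f p) :
    fderiv ℝ (fun y => fderiv ℝ f y v) p v ≤ 0 := by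
  set line : ℝ → EuclideanSpace ℝ (Fin d) := fun t => p + t • v with hline
  have hlineD : ∀ t : ℝ, HasDerivAt line v t := by
    intro t
    simpa [hline] using ((hasDerivAt_id t).smul_const v).const_add p
  have hlinecont : Continuous line := by continuity
  have hline0 : line 0 = p := by simp [hline]
  have htend : Tendsto line (nhds 0) (nhds p) := by
    rw [← hline0]; exact hlinecont.continuousAt
  set g : ℝ → ℝ := fun t => f (line t) with hg
  have hA : ∀ᶠ t in nhds (0:ℝ), DifferentiableAt ℝ f (line t) := htend.eventually h1
  have hAg : ∀ᶠ t in nhds (0:ℝ), HasDerivAt g (fderiv ℝ f (line t) v) t := by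
    filter_upwards [hA] with t ht
    exact ht.hasFDerivAt.comp_hasDerivAt t (hlineD t)
  have hgdiff : ∀ᶠ t in nhds (0:ℝ), DifferentiableAt ℝ g t :=
    hAg.mono fun t ht => ht.differentiableAt
  have hBev : deriv g =ᶠ[nhds (0:ℝ)] fun t => fderiv ℝ f (line t) v :=
    hAg.mono fun t ht => ht.deriv
  have hGd : HasDerivAt (fun t => fderiv ℝ f (line t) v)
      (fderiv ℝ (fun y => fderiv ℝ f y v) p v) 0 := by
    have h2' : HasFDerivAt (fun y => fderiv ℝ f y v)
        (fderiv ℝ (fun y => fderiv ℝ f y v) p) (line 0) := by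
      rw [hline0]; exact h2.hasFDerivAt
    exact h2'.comp_hasDerivAt 0 (hlineD 0)
  have hderivg2 : DifferentiableAt ℝ (deriv g) 0 := by
    rw [hBev.differentiableAt_iff]
    exact hGd.differentiableAt
  have hval : deriv (deriv g) 0 = fderiv ℝ (fun y => fderiv ℝ f y v) p v := by
    rw [hBev.deriv_eq]
    exact hGd.deriv
  have hgmax : IsLocalMax g 0 := by
    have h := htend.eventually hmax
    unfold IsLocalMax IsMaxFilter
    simpa [hg, hline0] using h
  rw [← hval]
  exact second_deriv_nonpos_of_isLocalMax hgdiff hderivg2 hgmax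

lemma coord_hasFDerivAt (F F' : ℝ → ℝ) (hF : ∀ s, HasDerivAt F (F' s) s)
    (j : Fin d) (y : EuclideanSpace ℝ (Fin d)) :
    HasFDerivAt (fun x : EuclideanSpace ℝ (Fin d) => F (x j))
      (F' (y j) • (EuclideanSpace.proj j : EuclideanSpace ℝ (Fin d) →L[ℝ] ℝ)) y := by
  have hproj : HasFDerivAt (fun x : EuclideanSpace ℝ (Fin d) => x j)
      (EuclideanSpace.proj j : EuclideanSpace ℝ (Fin d) →L[ℝ] ℝ) y :=
    (EuclideanSpace.proj j : EuclideanSpace ℝ (Fin d) →L[ℝ] ℝ).hasFDerivAt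
  exact (hF (y j)).comp_hasFDerivAt y hproj

section Barrier
variable (a K : ℝ) (b : EuclideanSpace ℝ (Fin d))

noncomputable def bar : EuclideanSpace ℝ (Fin d) → ℝ :=
  fun y => K * ∑ j : Fin d, Real.cosh (a * (y j - b j))

lemma bar_hasFDerivAt (y : EuclideanSpace ℝ (Fin d)) :
    HasFDerivAt (bar a K b)
      (∑ j : Fin d, (K * (a * Real.sinh (a * (y j - b j)))) •
        (EuclideanSpace.proj j : EuclideanSpace ℝ (Fin d) →L[ℝ] ℝ)) y := by
  have h : ∀ j : Fin d, HasFDerivAt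
      (fun x : EuclideanSpace ℝ (Fin d) => K * Real.cosh (a * (x j - b j)))
      ((K * (a * Real.sinh (a * (y j - b j)))) •
        (EuclideanSpace.proj j : EuclideanSpace ℝ (Fin d) →L[ℝ] ℝ)) y := by
    intro j
    exact coord_hasFDerivAt (fun s => K * Real.cosh (a * (s - b j)))
      (fun s => K * (a * Real.sinh (a * (s - b j))))
      (fun s => by
        have h1 : HasDerivAt (fun s : ℝ => a * (s - b j)) a s := by
          simpa using ((hasDerivAt_id s).sub_const (b j)).const_mul a
        have h2 := h1.cosh
        have := h2.const_mul K
        exact this.congr_deriv (by ring)) j y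
  have := HasFDerivAt.sum (fun j (_ : j ∈ Finset.univ) => h j)
  refine this.congr_of_eventuallyEq (Filter.Eventually.of_forall fun x => ?_)
  simp [bar, Finset.mul_sum]

lemma proj_single (i j : Fin d) :
    (EuclideanSpace.proj j : EuclideanSpace ℝ (Fin d) →L[ℝ] ℝ)
      (EuclideanSpace.single i 1) = if i = j then 1 else 0 := by
  simp [EuclideanSpace.single_apply, eq_comm]

lemma bar_fderiv_dir (y : EuclideanSpace ℝ (Fin d)) (i : Fin d) :
    fderiv ℝ (bar a K b) y (EuclideanSpace.single i 1)
      = K * (a * Real.sinh (a * (y i - b i))) := by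
  rw [(bar_hasFDerivAt a K b y).fderiv]
  rw [ContinuousLinearMap.sum_apply]
  simp only [ContinuousLinearMap.smul_apply, proj_single, smul_eq_mul]
  rw [Finset.sum_eq_single i]
  · simp
  · intro j _ hj; simp [Ne.symm hj]
  · simp

lemma bar_lap (x : EuclideanSpace ℝ (Fin d)) :
    lap (bar a K b) x = a^2 * bar a K b x := by
  unfold lap
  have key : ∀ i : Fin d,
      fderiv ℝ (fun y => fderiv ℝ (bar a K b) y (EuclideanSpace.single i 1)) x
        (EuclideanSpace.single i 1) = a^2 * (K * Real.cosh (a * (x i - b i))) := by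
    intro i
    have heq : (fun y : EuclideanSpace ℝ (Fin d) =>
        fderiv ℝ (bar a K b) y (EuclideanSpace.single i 1))
        = fun y => K * a * Real.sinh (a * (y i - b i)) := by
      funext y; rw [bar_fderiv_dir]; ring
    rw [heq]
    have h : HasFDerivAt (fun y : EuclideanSpace ℝ (Fin d) => K * a * Real.sinh (a * (y i - b i)))
        ((K * a * (a * Real.cosh (a * (x i - b i)))) •
          (EuclideanSpace.proj i : EuclideanSpace ℝ (Fin d) →L[ℝ] ℝ)) x := by
      exact coord_hasFDerivAt (fun s => K * a * Real.sinh (a * (s - b i)))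
        (fun s => K * a * (a * Real.cosh (a * (s - b i))))
        (fun s => by
          have h1 : HasDerivAt (fun s : ℝ => a * (s - b i)) a s := by
            simpa using ((hasDerivAt_id s).sub_const (b i)).const_mul a
          have := h1.sinh.const_mul (K * a)
          exact this.congr_deriv (by ring)) i x
    rw [h.fderiv]
    simp only [ContinuousLinearMap.smul_apply, proj_single, if_pos rfl, smul_eq_mul,
      eq_self_iff_true, if_true, mul_one]
    ring
  rw [Finset.sum_congr rfl (fun i _ => key i)]
  simp only [bar, Finset.mul_sum]

lemma bar_contDiff : ContDiff ℝ 2 (bar a K b) := by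
  unfold bar
  apply ContDiff.mul contDiff_const
  apply ContDiff.sum
  intro j _
  apply Real.contDiff_cosh.comp
  apply ContDiff.mul contDiff_const
  exact ContDiff.sub
    ((EuclideanSpace.proj j : EuclideanSpace ℝ (Fin d) →L[ℝ] ℝ).contDiff) contDiff_const

end Barrier

lemma dir_diff {f : EuclideanSpace ℝ (Fin d) → ℝ} {p : EuclideanSpace ℝ (Fin d)}
    (hf : ContDiffAt ℝ 2 f p) (v : EuclideanSpace ℝ (Fin d)) :
    DifferentiableAt ℝ (fun y => fderiv ℝ f y v) p := by
  have h1 : ContDiffAt ℝ 1 (fderiv ℝ f) p := hf.fderiv_right (by norm_num)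
  exact (h1.differentiableAt one_ne_zero).clm_apply (differentiableAt_const v)

end ExpDecayAux

open Filter Metric Real Set ExpDecayAux in
/-- Exponential decay estimate: if `Δu ≥ M u` and `0 ≤ u ≤ 1` in `B_{2R}(0)`, then
`sup_{B_R} u ≤ C e^{-c R √M}` with dimensional constants `C, c`. -/
theorem exponential_decay (d : ℕ) :
    ∃ C > 0, ∃ c > 0, ∀ R M : ℝ, 0 < R → 0 < M →
      ∀ u : EuclideanSpace ℝ (Fin d) → ℝ,
        ContDiffOn ℝ 2 u (Metric.ball 0 (2*R)) →
        (∀ x ∈ Metric.ball (0 : EuclideanSpace ℝ (Fin d)) (2*R), M * u x ≤ lap u x) →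
        (∀ x ∈ Metric.ball (0 : EuclideanSpace ℝ (Fin d)) (2*R), 0 ≤ u x ∧ u x ≤ 1) →
        ∀ x ∈ Metric.ball (0 : EuclideanSpace ℝ (Fin d)) R,
          u x ≤ C * Real.exp (-c * R * Real.sqrt M) := by
  rcases Nat.eq_zero_or_pos d with hd | hd
  · -- degenerate case d = 0
    subst hd
    refine ⟨2, by norm_num, 1, by norm_num, ?_⟩
    intro R M hR hM u _ hsub hbd x hx
    have hx2 : x ∈ Metric.ball (0 : EuclideanSpace ℝ (Fin 0)) (2*R) :=
      Metric.ball_subset_ball (by linarith) hx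
    have h0 : lap u x = 0 := by simp [lap]
    have h1 := hsub x hx2
    rw [h0] at h1
    have h2 : u x ≤ 0 := by nlinarith [(hbd x hx2).1]
    have : (0:ℝ) ≤ 2 * Real.exp (-1 * R * Real.sqrt M) := by positivity
    linarith
  · -- main case d ≥ 1
    have hd0 : (0:ℝ) < d := by exact_mod_cast hd
    set c₀ : ℝ := Real.log (4*d) with hc₀def
    have hd1 : (1:ℝ) ≤ (d:ℝ) := by exact_mod_cast hd
    have hc₀ : 0 < c₀ := Real.log_pos (by nlinarith)
    have hsd : (0:ℝ) < Real.sqrt d := Real.sqrt_pos.2 hd0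
    refine ⟨2, by norm_num, Real.log 2 / (Real.sqrt d * c₀), by positivity, ?_⟩
    intro R M hR hM u hC2 hsub hbd
    set a : ℝ := Real.sqrt M with hadef
    have ha : 0 < a := Real.sqrt_pos.2 hM
    set t : ℝ := Real.sqrt d * c₀ / a with htdef
    have ht : 0 < t := by positivity
    -- key iteration
    have key : ∀ k : ℕ, ∀ x : EuclideanSpace ℝ (Fin d),
        ‖x‖ < 2*R - k*t → u x ≤ (1/2:ℝ)^k := by
      intro k
      induction k with
      | zero =>
        intro x hx
        have hx' : x ∈ Metric.ball (0 : EuclideanSpace ℝ (Fin d)) (2*R) := by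
          rw [mem_ball_zero_iff]
          simpa using hx
        simpa using (hbd x hx').2
      | succ k ih =>
        intro x₀ hx₀
        push_cast at hx₀
        set K : ℝ := (1/2:ℝ)^k / (2*d) with hKdef
        have hK : 0 < K := by positivity
        set w : EuclideanSpace ℝ (Fin d) → ℝ := bar a K x₀ with hwdef
        have hsub1 : Metric.closedBall x₀ t ⊆ Metric.ball (0 : EuclideanSpace ℝ (Fin d)) (2*R - k*t) := by
          intro y hy
          rw [Metric.mem_closedBall, dist_eq_norm] at hy
          rw [mem_ball_zero_iff]
          calc ‖y‖ = ‖(y - x₀) + x₀‖ := by congr 1; abel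
          _ ≤ ‖y - x₀‖ + ‖x₀‖ := norm_add_le _ _
          _ < t + (2*R - (k+1)*t) := by linarith
          _ = 2*R - k*t := by ring
        have hsub3 : Metric.closedBall x₀ t ⊆ Metric.ball (0 : EuclideanSpace ℝ (Fin d)) (2*R) := by
          refine hsub1.trans (Metric.ball_subset_ball ?_)
          nlinarith [Nat.cast_nonneg (α := ℝ) k]
        -- continuity of u - w on the closed ball
        have hwcont : Continuous w := (bar_contDiff a K x₀).continuous
        have hcont : ContinuousOn (fun x => u x - w x) (Metric.closedBall x₀ t) :=
          (hC2.continuousOn.mono hsub3).sub hwcont.continuousOn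
        obtain ⟨p, hpD, hpmax⟩ := (isCompact_closedBall x₀ t).exists_isMaxOn
          ⟨x₀, Metric.mem_closedBall_self ht.le⟩ hcont
        have hwx₀ : w x₀ = (1/2:ℝ)^(k+1) := by
          have : ∀ j : Fin d, Real.cosh (a * (x₀ j - x₀ j)) = 1 := by
            intro j; simp
          rw [hwdef]
          unfold bar
          rw [Finset.sum_congr rfl (fun j _ => this j)]
          simp only [Finset.sum_const, Finset.card_univ, Fintype.card_fin, nsmul_eq_mul, mul_one]
          rw [hKdef, pow_succ]
          field_simp [hd0.ne']
        -- the sphere lower bound for w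
        have hwge : ∀ y : EuclideanSpace ℝ (Fin d), dist y x₀ = t → (1/2:ℝ)^k ≤ w y := by
          intro y hdist
          rw [dist_eq_norm] at hdist
          have hsq : ∑ i : Fin d, (y i - x₀ i)^2 = t^2 := by
            have hne := EuclideanSpace.norm_eq (y - x₀)
            rw [hdist] at hne
            have h1 : ∀ i : Fin d, ‖(y - x₀) i‖^2 = (y i - x₀ i)^2 := by
              intro i
              have h2 : (y - x₀) i = y i - x₀ i := rfl
              rw [h2, Real.norm_eq_abs, sq_abs]
            rw [Finset.sum_congr rfl (fun i _ => h1 i)] at hne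
            have hS : (0:ℝ) ≤ ∑ i : Fin d, (y i - x₀ i)^2 :=
              Finset.sum_nonneg (fun i _ => sq_nonneg _)
            rw [hne, Real.sq_sqrt hS]
          have hexj : ∃ j : Fin d, t^2/(d:ℝ) ≤ (y j - x₀ j)^2 := by
            have hne : (Finset.univ : Finset (Fin d)).Nonempty := by
              have : Nonempty (Fin d) := ⟨⟨0, hd⟩⟩
              exact Finset.univ_nonempty
            have hsum_le : ∑ _i : Fin d, t^2/(d:ℝ) ≤ ∑ i : Fin d, (y i - x₀ i)^2 := by
              rw [hsq]
              simp only [Finset.sum_const, Finset.card_univ, Fintype.card_fin, nsmul_eq_mul]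
              rw [mul_div_cancel₀]
              exact ne_of_gt hd0
            obtain ⟨j, _, hj⟩ := Finset.exists_le_of_sum_le hne hsum_le
            exact ⟨j, hj⟩
          obtain ⟨j, hj⟩ := hexj
          have habs : t / Real.sqrt d ≤ |y j - x₀ j| := by
            have h0 : (t / Real.sqrt d)^2 = t^2 / (d:ℝ) := by
              rw [div_pow]
              congr 1
              exact Real.sq_sqrt hd0.le
            calc t / Real.sqrt d = Real.sqrt ((t / Real.sqrt d)^2) :=
              (Real.sqrt_sq (by positivity)).symm
            _ ≤ Real.sqrt (|y j - x₀ j|^2) := by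
              apply Real.sqrt_le_sqrt
              rw [sq_abs, h0]
              exact hj
            _ = |y j - x₀ j| := Real.sqrt_sq (abs_nonneg _)
          have hco : Real.cosh c₀ ≤ Real.cosh (a * (y j - x₀ j)) := by
            rw [Real.cosh_le_cosh]
            rw [abs_of_pos hc₀, abs_mul, abs_of_pos ha]
            have hc1 : c₀ = a * (t / Real.sqrt d) := by
              rw [htdef]
              field_simp [ha.ne', hsd.ne']
            rw [hc1]
            exact mul_le_mul_of_nonneg_left habs ha.le
          have h2d : (2:ℝ)*d ≤ Real.cosh c₀ := by
            have h1 : Real.exp c₀ = 4*d := Real.exp_log (by positivity)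
            have h2 := Real.cosh_eq c₀
            have h3 : 0 < Real.exp (-c₀) := Real.exp_pos _
            rw [h2, h1]
            linarith
          have hsumge : Real.cosh (a * (y j - x₀ j)) ≤
              ∑ i : Fin d, Real.cosh (a * (y i - x₀ i)) :=
            Finset.single_le_sum (f := fun i => Real.cosh (a * (y i - x₀ i)))
              (fun i _ => by positivity) (Finset.mem_univ j)
          have : (2:ℝ)*d ≤ ∑ i : Fin d, Real.cosh (a * (y i - x₀ i)) := by linarith
          have hKeq : (1/2:ℝ)^k = K * (2*d) := by
            rw [hKdef]
            field_simp
          rw [hKeq]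
          calc K * (2*(d:ℝ)) ≤ K * ∑ i : Fin d, Real.cosh (a * (y i - x₀ i)) :=
            mul_le_mul_of_nonneg_left this hK.le
          _ = w y := rfl
        -- main comparison: u p ≤ w p
        have hple : u p - w p ≤ 0 := by
          by_contra hple
          push_neg at hple
          have hpnotsphere : dist p x₀ < t := by
            rcases lt_or_eq_of_le (Metric.mem_closedBall.1 hpD) with h | h
            · exact h
            · exfalso
              have h1 : u p ≤ (1/2:ℝ)^k := by
                apply ih
                have := hsub1 hpD
                rwa [mem_ball_zero_iff] at this
              have h2 := hwge p h
              linarith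
          have hDnhds : Metric.closedBall x₀ t ∈ nhds p :=
            mem_of_superset (Metric.isOpen_ball.mem_nhds hpnotsphere) Metric.ball_subset_closedBall
          have hlocmax : IsLocalMax (fun x => u x - w x) p := hpmax.isLocalMax hDnhds
          have hp2R : p ∈ Metric.ball (0 : EuclideanSpace ℝ (Fin d)) (2*R) := hsub3 hpD
          have hball_nhds : Metric.ball (0 : EuclideanSpace ℝ (Fin d)) (2*R) ∈ nhds p :=
            Metric.isOpen_ball.mem_nhds hp2R
          have hunhds : ∀ᶠ y in nhds p, DifferentiableAt ℝ u y := by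
            filter_upwards [hball_nhds] with y hy
            exact (hC2.differentiableOn (by norm_num)).differentiableAt
              (Metric.isOpen_ball.mem_nhds hy)
          have hwd : ∀ y, DifferentiableAt ℝ w y := fun y =>
            (bar_hasFDerivAt a K x₀ y).differentiableAt
          have hu2 : ∀ v, DifferentiableAt ℝ (fun y => fderiv ℝ u y v) p :=
            fun v => dir_diff (hC2.contDiffAt hball_nhds) v
          have hw2 : ∀ v, DifferentiableAt ℝ (fun y => fderiv ℝ w y v) p :=
            fun v => dir_diff ((bar_contDiff a K x₀).contDiffAt) v
          -- eventual equality of derivatives of the difference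
          have hfd_ev : ∀ v : EuclideanSpace ℝ (Fin d),
              (fun y => fderiv ℝ (fun x => u x - w x) y v)
                =ᶠ[nhds p] fun y => fderiv ℝ u y v - fderiv ℝ w y v := by
            intro v
            filter_upwards [hunhds] with y hy
            rw [fderiv_fun_sub hy (hwd y)]
            simp
          have hh2 : ∀ v, DifferentiableAt ℝ (fun y => fderiv ℝ (fun x => u x - w x) y v) p := by
            intro v
            rw [(hfd_ev v).differentiableAt_iff]
            exact (hu2 v).sub (hw2 v)
          -- the Laplacian of the difference splits
          have hlapsub : lap (fun x => u x - w x) p = lap u p - lap w p := by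
            unfold lap
            rw [← Finset.sum_sub_distrib]
            apply Finset.sum_congr rfl
            intro i _
            rw [(hfd_ev (EuclideanSpace.single i 1)).fderiv_eq]
            rw [fderiv_fun_sub (hu2 _) (hw2 _)]
            simp
          have hlapw : lap w p = M * w p := by
            rw [hwdef, bar_lap, hadef, Real.sq_sqrt hM.le]
          have hlapu : M * u p ≤ lap u p := hsub p hp2R
          -- nonpositivity of the Laplacian at the interior max
          have hlapnonpos : lap (fun x => u x - w x) p ≤ 0 := by
            unfold lap
            apply Finset.sum_nonpos
            intro i _
            apply dir2_nonpos
            · filter_upwards [hunhds] with y hy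
              exact hy.sub (hwd y)
            · exact hh2 _
            · exact hlocmax
          have : 0 < M * (u p - w p) := by positivity
          rw [hlapsub, hlapw] at hlapnonpos
          nlinarith
        have h9 : u x₀ - w x₀ ≤ u p - w p := hpmax (Metric.mem_closedBall_self ht.le)
        linarith [hwx₀.symm.le, hwx₀.le, h9, hple]
    -- conclude from the iteration
    intro x hx
    rw [mem_ball_zero_iff] at hx
    set N : ℕ := ⌊R / t⌋₊ with hNdef
    have hNt : (N:ℝ) * t ≤ R := by
      have h1 : (N:ℝ) ≤ R / t := Nat.floor_le (by positivity)
      calc (N:ℝ) * t ≤ (R/t) * t := by nlinarith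
      _ = R := by field_simp
    have hxN : ‖x‖ < 2*R - N*t := by linarith
    have hux := key N x hxN
    have hRt : R / t < N + 1 := Nat.lt_floor_add_one _
    -- now the numeric bound
    have hhalf : (1/2:ℝ)^N = Real.exp ((N:ℝ) * Real.log (1/2)) := by
      rw [Real.exp_nat_mul, Real.exp_log (by norm_num : (0:ℝ) < 1/2)]
    have hlog : Real.log (1/2:ℝ) = -Real.log 2 := by
      rw [one_div, Real.log_inv]
    have hct : Real.log 2 / (Real.sqrt d * c₀) * R * Real.sqrt M = (R/t) * Real.log 2 := by
      rw [htdef, hadef]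
      field_simp
    have hexp : (1/2:ℝ)^N ≤ 2 * Real.exp (-(Real.log 2 / (Real.sqrt d * c₀)) * R * Real.sqrt M) := by
      rw [hhalf, hlog]
      have hstep : Real.exp ((N:ℝ) * -Real.log 2) ≤
          Real.exp (Real.log 2 + -(Real.log 2 / (Real.sqrt d * c₀)) * R * Real.sqrt M) := by
        apply Real.exp_le_exp.2
        have heq : -(Real.log 2 / (Real.sqrt d * c₀)) * R * Real.sqrt M = -((R/t) * Real.log 2) := by
          rw [← hct]; ring
        rw [heq]
        have hl2 : 0 < Real.log 2 := Real.log_pos (by norm_num)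
        nlinarith
      calc Real.exp ((N:ℝ) * -Real.log 2) ≤
          Real.exp (Real.log 2 + -(Real.log 2 / (Real.sqrt d * c₀)) * R * Real.sqrt M) := hstep
      _ = 2 * Real.exp (-(Real.log 2 / (Real.sqrt d * c₀)) * R * Real.sqrt M) := by
        rw [Real.exp_add, Real.exp_log (by norm_num : (0:ℝ) < 2)]
    calc u x ≤ (1/2:ℝ)^N := hux
    _ ≤ 2 * Real.exp (-(Real.log 2 / (Real.sqrt d * c₀)) * R * Real.sqrt M) := hexp
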